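/- Define u, ξ : ℝ × [0,1] → ℝ by u(t,x) = (1/2) cos(πx) sin(πt) and ξ(t,x) = (1/2) sin(πx) cos(πt). Then for all t ∈ ℝ and x ∈ [0,1]: ∂ₜu(t,x) = ∂ₓξ(t,x) and ∂ₜξ(t,x) = ∂ₓu(t,x); |ξ(t,x)| ≤ 1/2; ξ(t,0) = ξ(t,1) = 0; and ∫₀¹ u(t,x)² dx = sin²(πt)/8. In particular, the L²(0,1) norm of u(t,·) does not converge to 0 as t → +∞, so (u, ξ) is a solution of the one-dimensional primal–dual system with non-saturated constraint |ξ| < 1 and homogeneous Neumann boundary conditions that does not converge to the unique minimizer u ≡ 0 of v ↦ ∫₀¹ |v'|. -/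

import Mathlib

open Real Filter

lemma dsin' (c t : ℝ) : HasDerivAt (fun s => Real.sin (c * s)) (c * Real.cos (c * t)) t := by
  have := (Real.hasDerivAt_sin (c * t)).comp t ((hasDerivAt_id t).const_mul c)
  simpa [mul_comm, Function.comp_def] using this

lemma dcos' (c t : ℝ) : HasDerivAt (fun s => Real.cos (c * s)) (-(c * Real.sin (c * t))) t := by
  have := (Real.hasDerivAt_cos (c * t)).comp t ((hasDerivAt_id t).const_mul c)
  simpa [mul_comm, Function.comp_def] using this

lemma cos_sq_int' : (∫ x in (0:ℝ)..1, Real.cos (Real.pi * x) ^ 2) = 1 / 2 := by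
  rw [intervalIntegral.integral_comp_mul_left (fun x => Real.cos x ^ 2) Real.pi_ne_zero]
  rw [integral_cos_sq]
  simp [Real.sin_pi, Real.cos_pi]
  field_simp

theorem primal_dual_oscillating_solution
    (u ξ : ℝ → ℝ → ℝ)
    (hu : u = fun t x => (1 / 2) * Real.cos (Real.pi * x) * Real.sin (Real.pi * t))
    (hξ : ξ = fun t x => (1 / 2) * Real.sin (Real.pi * x) * Real.cos (Real.pi * t)) :
    (∀ t x : ℝ, ∃ a : ℝ,
      HasDerivAt (fun s => u s x) a t ∧ HasDerivAt (fun y => ξ t y) a x) ∧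
    (∀ t x : ℝ, ∃ a : ℝ,
      HasDerivAt (fun s => ξ s x) a t ∧ HasDerivAt (fun y => u t y) a x) ∧
    (∀ t : ℝ, ∀ x ∈ Set.Icc (0 : ℝ) 1, |ξ t x| ≤ 1 / 2) ∧
    (∀ t : ℝ, ξ t 0 = 0 ∧ ξ t 1 = 0) ∧
    (∀ t : ℝ, (∫ x in (0 : ℝ)..1, (u t x) ^ 2) = Real.sin (Real.pi * t) ^ 2 / 8) ∧
    ¬ Tendsto (fun t : ℝ => ∫ x in (0 : ℝ)..1, (u t x) ^ 2) atTop (nhds 0) := by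
  subst hu hξ
  have hint : ∀ t : ℝ,
      (∫ x in (0 : ℝ)..1,
        ((1 / 2) * Real.cos (Real.pi * x) * Real.sin (Real.pi * t)) ^ 2)
        = Real.sin (Real.pi * t) ^ 2 / 8 := by
    intro t
    have : (∫ x in (0 : ℝ)..1,
        ((1 / 2) * Real.cos (Real.pi * x) * Real.sin (Real.pi * t)) ^ 2)
        = (Real.sin (Real.pi * t) ^ 2 / 4) * ∫ x in (0:ℝ)..1, Real.cos (Real.pi * x) ^ 2 := by
      rw [← intervalIntegral.integral_const_mul]
      apply intervalIntegral.integral_congr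
      intro x _
      ring
    rw [this, cos_sq_int']
    ring
  refine ⟨?_, ?_, ?_, ?_, hint, ?_⟩
  · intro t x
    refine ⟨(1 / 2) * Real.pi * Real.cos (Real.pi * x) * Real.cos (Real.pi * t), ?_, ?_⟩
    · have h := ((dsin' Real.pi t).const_mul ((1 / 2) * Real.cos (Real.pi * x)))
      convert h using 1
      all_goals first | rfl | ring
    · have h := ((dsin' Real.pi x).const_mul ((1 / 2) * Real.cos (Real.pi * t)))
      have hf : (fun y => (1 / 2) * Real.cos (Real.pi * t) * Real.sin (Real.pi * y))
          = fun y => (1 / 2) * Real.sin (Real.pi * y) * Real.cos (Real.pi * t) := by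
        funext y; ring
      rw [hf] at h
      convert h using 1
      all_goals first | rfl | ring
  · intro t x
    refine ⟨-((1 / 2) * Real.pi * Real.sin (Real.pi * x) * Real.sin (Real.pi * t)), ?_, ?_⟩
    · have h := ((dcos' Real.pi t).const_mul ((1 / 2) * Real.sin (Real.pi * x)))
      have hf : (fun s => (1 / 2) * Real.sin (Real.pi * x) * Real.cos (Real.pi * s))
          = fun s => (1 / 2) * Real.sin (Real.pi * x) * Real.cos (Real.pi * s) := rfl
      convert h using 1
      all_goals first | rfl | ring
    · have h := ((dcos' Real.pi x).const_mul ((1 / 2) * Real.sin (Real.pi * t)))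
      have hf : (fun y => (1 / 2) * Real.sin (Real.pi * t) * Real.cos (Real.pi * y))
          = fun y => (1 / 2) * Real.cos (Real.pi * y) * Real.sin (Real.pi * t) := by
        funext y; ring
      rw [hf] at h
      convert h using 1
      all_goals first | rfl | ring
  · intro t x _
    have h1 : |Real.sin (Real.pi * x)| ≤ 1 := Real.abs_sin_le_one _
    have h2 : |Real.cos (Real.pi * t)| ≤ 1 := Real.abs_cos_le_one _
    calc |(1 / 2) * Real.sin (Real.pi * x) * Real.cos (Real.pi * t)|
        = (1 / 2) * (|Real.sin (Real.pi * x)| * |Real.cos (Real.pi * t)|) := by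
          rw [abs_mul, abs_mul]; simp [mul_assoc]
      _ ≤ (1 / 2) * (1 * 1) := by
          apply mul_le_mul_of_nonneg_left _ (by norm_num)
          exact mul_le_mul h1 h2 (abs_nonneg _) zero_le_one
      _ = 1 / 2 := by norm_num
  · intro t; constructor <;> simp [Real.sin_pi]
  · intro hT
    have hcomp : Tendsto (fun n : ℕ => (n : ℝ) * 2 + 1 / 2) atTop atTop := by
      apply tendsto_atTop_add_const_right
      exact (tendsto_natCast_atTop_atTop).atTop_mul_const (by norm_num)
    have := hT.comp hcomp
    have heq : (fun n : ℕ => ∫ x in (0 : ℝ)..1,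
        ((1 / 2) * Real.cos (Real.pi * x) * Real.sin (Real.pi * ((n : ℝ) * 2 + 1 / 2))) ^ 2)
        = fun _ : ℕ => (1 : ℝ) / 8 := by
      funext n
      rw [hint]
      have : Real.sin (Real.pi * ((n : ℝ) * 2 + 1 / 2)) = 1 := by
        have : Real.pi * ((n : ℝ) * 2 + 1 / 2) = Real.pi / 2 + (n : ℝ) * (2 * Real.pi) := by
          ring
        rw [this, Real.sin_add_nat_mul_two_pi, Real.sin_pi_div_two]
      rw [this]; norm_num
    rw [show ((fun t : ℝ => ∫ x in (0 : ℝ)..1,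
        ((1 / 2) * Real.cos (Real.pi * x) * Real.sin (Real.pi * t)) ^ 2) ∘
        (fun n : ℕ => (n : ℝ) * 2 + 1 / 2)) = fun _ : ℕ => (1 : ℝ) / 8 from heq] at this
    have := tendsto_nhds_unique this tendsto_const_nhds
    norm_num at this
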